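/- arXiv:2205.15368 — 2 statements merged into one kernel-verified Lean document; each statement's English description precedes it below -/
import Mathlib

section
/- Let H be a Hilbert space, F : H × [0,∞) → [-∞,∞], Q ∈ L(H,H) self-adjoint positive semidefinite, and M a closed subspace such that: (a) F(h,u) ≥ F(P_M h, u) for all h, u; (b) for each h, u ↦ F(h,u) is nondecreasing; (c) Q M ⊆ M. Then inf_{h ∈ H} F(h, ⟨Qh,h⟩^{1/2}) = inf_{h ∈ M} F(h, ⟨Qh,h⟩^{1/2}), and if h* is a global minimizer of h ↦ F(h, ⟨Qh,h⟩^{1/2}) then so is P_M h*. -/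
open scoped RealInnerProductSpace

theorem stmt7 {H : Type*} [NormedAddCommGroup H] [InnerProductSpace ℝ H] [CompleteSpace H]
    (Q : H →L[ℝ] H) (hsa : ∀ x y : H, ⟪Q x, y⟫ = ⟪x, Q y⟫)
    (hpsd : ∀ h : H, 0 ≤ ⟪Q h, h⟫)
    (M : Submodule ℝ H) [CompleteSpace M]
    (F : H → ℝ → EReal)
    (ha : ∀ (h : H) (u : ℝ), 0 ≤ u → F ((Submodule.orthogonalProjectionOnto M h : H)) u ≤ F h u)
    (hb : ∀ h : H, MonotoneOn (F h) (Set.Ici (0 : ℝ)))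
    (hc : ∀ x ∈ M, Q x ∈ M) :
    (⨅ h : H, F h (Real.sqrt ⟪Q h, h⟫)) = (⨅ h : M, F (h : H) (Real.sqrt ⟪Q (h : H), (h : H)⟫))
      ∧ ∀ hstar : H, (∀ h : H, F hstar (Real.sqrt ⟪Q hstar, hstar⟫) ≤ F h (Real.sqrt ⟪Q h, h⟫)) →
          (∀ h : H, F ((Submodule.orthogonalProjectionOnto M hstar : H))
              (Real.sqrt ⟪Q (Submodule.orthogonalProjectionOnto M hstar : H), (Submodule.orthogonalProjectionOnto M hstar : H)⟫)
            ≤ F h (Real.sqrt ⟪Q h, h⟫)) := by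
  have key : ∀ h : H, F ((Submodule.orthogonalProjectionOnto M h : H))
      (Real.sqrt ⟪Q (Submodule.orthogonalProjectionOnto M h : H), (Submodule.orthogonalProjectionOnto M h : H)⟫)
      ≤ F h (Real.sqrt ⟪Q h, h⟫) := by
    intro h
    set p : H := (Submodule.orthogonalProjectionOnto M h : H) with hp
    set q : H := h - p with hq
    have hpM : p ∈ M := (Submodule.orthogonalProjectionOnto M h).2
    have hqM : q ∈ Mᗮ := M.sub_starProjection_mem_orthogonal h
    have hcross1 : ⟪Q p, q⟫ = 0 := Submodule.inner_right_of_mem_orthogonal (hc p hpM) hqM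
    have hcross2 : ⟪Q q, p⟫ = 0 := by
      rw [hsa]; exact Submodule.inner_left_of_mem_orthogonal (hc p hpM) hqM
    have hdecomp : ⟪Q h, h⟫ = ⟪Q p, p⟫ + ⟪Q q, q⟫ := by
      have hh : h = p + q := by simp [hq]
      rw [hh, map_add, inner_add_left, inner_add_right, inner_add_right, hcross1, hcross2]
      ring
    have hineq : ⟪Q p, p⟫ ≤ ⟪Q h, h⟫ := by
      rw [hdecomp]; linarith [hpsd q]
    calc F p (Real.sqrt ⟪Q p, p⟫) ≤ F p (Real.sqrt ⟪Q h, h⟫) := by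
          exact hb p (Real.sqrt_nonneg _) (Real.sqrt_nonneg _) (Real.sqrt_le_sqrt hineq)
      _ ≤ F h (Real.sqrt ⟪Q h, h⟫) := ha h _ (Real.sqrt_nonneg _)
  constructor
  · apply le_antisymm
    · exact le_iInf fun m => iInf_le _ (m : H)
    · refine le_iInf fun h => ?_
      refine le_trans (iInf_le _ ⟨(Submodule.orthogonalProjectionOnto M h : H), (Submodule.orthogonalProjectionOnto M h).2⟩) ?_
      exact key h
  · intro hstar hmin h
    exact le_trans (key hstar) (hmin h)
end

section
/- Under the hypotheses of the general Hilbert-space minimization theorem (F(h,u) ≥ F(P_M h, u); Q self-adjoint psd; Q M ⊆ M), if additionally for each h the map u ↦ F(h,u) is strictly increasing and N_Q ⊆ M (equivalently N_Q ∩ M^⊥ = {0}), then every global minimizer h* of h ↦ F(h, ⟨Qh,h⟩^{1/2}) lies in M. -/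
open scoped RealInnerProductSpace

theorem stmt8 {H : Type*} [NormedAddCommGroup H] [InnerProductSpace ℝ H] [CompleteSpace H]
    (Q : H →L[ℝ] H) (hsa : ∀ x y : H, ⟪Q x, y⟫ = ⟪x, Q y⟫)
    (hpsd : ∀ h : H, 0 ≤ ⟪Q h, h⟫)
    (M : Submodule ℝ H) [CompleteSpace M]
    (F : H → ℝ → EReal)
    (ha : ∀ (h : H) (u : ℝ), 0 ≤ u → F ((M.orthogonalProjectionOnto h : H)) u ≤ F h u)
    (hb : ∀ h : H, StrictMonoOn (F h) (Set.Ici (0 : ℝ)))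
    (hc : ∀ x ∈ M, Q x ∈ M)
    (hN : ∀ g : H, ⟪Q g, g⟫ = 0 → g ∈ M) :
    ∀ hstar : H, (∀ h : H, F hstar (Real.sqrt ⟪Q hstar, hstar⟫) ≤ F h (Real.sqrt ⟪Q h, h⟫)) →
      hstar ∈ M := by
  intro h hmin
  by_contra hnotM
  set p : H := (M.orthogonalProjectionOnto h : H) with hp
  have hpM : p ∈ M := (M.orthogonalProjectionOnto h).2
  have hoO : h - p ∈ Mᗮ := Submodule.sub_starProjection_mem_orthogonal (K := M) h
  -- cross terms vanish
  have h1 : ⟪Q p, h - p⟫ = 0 := hoO (Q p) (hc p hpM)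
  have h2 : ⟪Q (h - p), p⟫ = 0 := by
    rw [hsa, real_inner_comm]; exact hoO (Q p) (hc p hpM)
  have hexp : ⟪Q h, h⟫ = ⟪Q p, p⟫ + ⟪Q (h - p), h - p⟫ := by
    have : h = p + (h - p) := by abel
    calc ⟪Q h, h⟫ = ⟪Q (p + (h - p)), p + (h - p)⟫ := by rw [← this]
    _ = ⟪Q p, p⟫ + ⟪Q p, h - p⟫ + (⟪Q (h - p), p⟫ + ⟪Q (h - p), h - p⟫) := by
        rw [map_add, inner_add_left, inner_add_right, inner_add_right]
    _ = ⟪Q p, p⟫ + ⟪Q (h - p), h - p⟫ := by rw [h1, h2]; ring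
  -- strict positivity of the residual term
  have hne : h - p ≠ 0 := by
    intro h0
    exact hnotM (by rw [show h = p from by rw [← sub_eq_zero]; exact h0]; exact hpM)
  have hres : 0 < ⟪Q (h - p), h - p⟫ := by
    rcases lt_or_eq_of_le (hpsd (h - p)) with hlt | heq
    · exact hlt
    · exfalso
      have hmem : h - p ∈ M := hN _ heq.symm
      have : ⟪h - p, h - p⟫ = 0 := hoO (h - p) hmem
      exact hne (inner_self_eq_zero.mp this)
  have hlt : ⟪Q p, p⟫ < ⟪Q h, h⟫ := by rw [hexp]; linarith
  have hsqrt : Real.sqrt ⟪Q p, p⟫ < Real.sqrt ⟪Q h, h⟫ :=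
    Real.sqrt_lt_sqrt (hpsd p) hlt
  have s1 : F p (Real.sqrt ⟪Q p, p⟫) < F p (Real.sqrt ⟪Q h, h⟫) :=
    hb p (Real.sqrt_nonneg _) (Real.sqrt_nonneg _) hsqrt
  have s2 : F p (Real.sqrt ⟪Q h, h⟫) ≤ F h (Real.sqrt ⟪Q h, h⟫) :=
    ha h _ (Real.sqrt_nonneg _)
  have s3 : F h (Real.sqrt ⟪Q h, h⟫) ≤ F p (Real.sqrt ⟪Q p, p⟫) := by
    have := hmin p
    simpa [hp] using this
  exact absurd (lt_of_lt_of_le (lt_of_lt_of_le s1 s2) s3) (lt_irrefl _)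
end
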